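/- Support properties of the (N,N) orbital integral: Let f : GL₂(ℂ) → ℂ be continuous and compactly supported. Then: (i) there exists a compact set K ⊆ ℂ ∖ {0} such that J(a, c, f) = 0 for all a ∈ ℂ ∖ {0} whenever c ∉ K; and (ii) there exists δ > 0 such that J(a, c, f) = 0 for all c ∈ ℂ ∖ {0} whenever 0 < |a| < δ. -/

import Mathlib

open MeasureTheory Filter Topology Complex
open scoped ENNReal


/-- `n(x) = [[1, x], [0, 1]]`. -/
def nMat (x : ℂ) : Matrix (Fin 2) (Fin 2) ℂ := !![1, x; 0, 1]

/-- `z(c) = [[c, 0], [0, c]]`. -/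
def zMat (c : ℂ) : Matrix (Fin 2) (Fin 2) ℂ := !![c, 0; 0, c]

/-- `s(a) = [[a, 0], [0, 1/a]]`. -/
noncomputable def sMat (a : ℂ) : Matrix (Fin 2) (Fin 2) ℂ := !![a, 0; 0, a⁻¹]

/-- `w₀ = [[0, 1], [1, 0]]`. -/
def w0Mat : Matrix (Fin 2) (Fin 2) ℂ := !![0, 1; 1, 0]

/-- The `(N,N)` orbital integral `J(a, c, f) = ∬ f(n(x) z(c) s(a) w₀ n(y)) dA(x) dA(y)`. -/
noncomputable def Jorb (f : Matrix (Fin 2) (Fin 2) ℂ → ℂ) (a c : ℂ) : ℂ :=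
  ∫ p : ℂ × ℂ, f (nMat p.1 * zMat c * sMat a * w0Mat * nMat p.2)

lemma prod_det (a c x y : ℂ) (ha : a ≠ 0) :
    (nMat x * zMat c * sMat a * w0Mat * nMat y).det = -c^2 := by
  simp [Matrix.det_mul, nMat, zMat, sMat, w0Mat, Matrix.det_fin_two_of]
  field_simp
  ring

lemma prod_entry (a c x y : ℂ) :
    (nMat x * zMat c * sMat a * w0Mat * nMat y) 1 0 = c * a⁻¹ := by
  simp [nMat, zMat, sMat, w0Mat, Matrix.mul_fin_two]

/-- **Support properties of the `(N,N)` orbital integral.** (i) There is a compact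
`K ⊆ ℂ ∖ {0}` such that `J(a, c, f) = 0` for all `a ≠ 0` whenever `c ∉ K`; (ii) there is
`δ > 0` such that `J(a, c, f) = 0` for all `c ≠ 0` whenever `0 < |a| < δ`. -/
theorem NN_orbital_integral_support (f : Matrix (Fin 2) (Fin 2) ℂ → ℂ)
    (hf : Continuous f) (hcs : HasCompactSupport f) (hGL : tsupport f ⊆ {g | g.det ≠ 0}) :
    (∃ K : Set ℂ, IsCompact K ∧ K ⊆ {(0 : ℂ)}ᶜ ∧
      ∀ c : ℂ, c ≠ 0 → c ∉ K → ∀ a : ℂ, a ≠ 0 → Jorb f a c = 0) ∧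
    (∃ δ > (0 : ℝ), ∀ a : ℂ, a ≠ 0 → ‖a‖ < δ →
      ∀ c : ℂ, c ≠ 0 → Jorb f a c = 0) := by
  have hK' : IsCompact (tsupport f) := hcs
  -- continuous auxiliary functions
  have hcont1 : Continuous fun g : Matrix (Fin 2) (Fin 2) ℂ => ‖g.det‖ :=
    continuous_norm.comp continuous_id.matrix_det
  have hcont2 : Continuous fun g : Matrix (Fin 2) (Fin 2) ℂ => ‖g 1 0‖ :=
    continuous_norm.comp ((continuous_apply (0 : Fin 2)).comp
      (continuous_apply (1 : Fin 2)))
  obtain ⟨ε, hε, M, hM, hbound⟩ : ∃ ε > (0 : ℝ), ∃ M > (0 : ℝ), ∀ g ∈ tsupport f,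
      ε ≤ ‖g.det‖ ∧ ‖g.det‖ ≤ M ∧ ‖g 1 0‖ ≤ M := by
    rcases (tsupport f).eq_empty_or_nonempty with h | h
    · exact ⟨1, one_pos, 1, one_pos, by simp [h]⟩
    · obtain ⟨g₀, hg₀, hmin'⟩ := hK'.exists_isMinOn h hcont1.continuousOn
      obtain ⟨g₁, _, hmax'⟩ := hK'.exists_isMaxOn h
        (hcont1.max hcont2).continuousOn
      have hmin := isMinOn_iff.mp hmin'
      have hmax := isMaxOn_iff.mp hmax'
      refine ⟨‖g₀.det‖, ?_, max (‖g₁.det‖)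
        (‖g₁ 1 0‖) + 1, ?_, ?_⟩
      · have := hGL hg₀
        simpa using this
      · have : (0 : ℝ) ≤ max (‖g₁.det‖) (‖g₁ 1 0‖) :=
          le_trans (norm_nonneg _) (le_max_left _ _)
        linarith
      · intro g hg
        have h1 := hmin g hg
        have h2 := hmax g hg
        constructor
        · exact h1
        constructor
        · calc ‖g.det‖ ≤ max (‖g.det‖) (‖g 1 0‖) :=
              le_max_left _ _
            _ ≤ max (‖g₁.det‖) (‖g₁ 1 0‖) := h2
            _ ≤ _ := by linarith
        · calc ‖g 1 0‖ ≤ max (‖g.det‖) (‖g 1 0‖) :=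
              le_max_right _ _
            _ ≤ max (‖g₁.det‖) (‖g₁ 1 0‖) := h2
            _ ≤ _ := by linarith
  -- key support fact
  have key : ∀ a c x y : ℂ, a ≠ 0 →
      (nMat x * zMat c * sMat a * w0Mat * nMat y) ∈ tsupport f →
      ε ≤ (‖c‖) ^ 2 ∧ (‖c‖) ^ 2 ≤ M ∧
        ‖c‖ / ‖a‖ ≤ M := by
    intro a c x y ha hg
    obtain ⟨h1, h2, h3⟩ := hbound _ hg
    rw [prod_det a c x y ha] at h1 h2
    rw [prod_entry a c x y] at h3
    have habs : ‖-c ^ 2‖ = (‖c‖) ^ 2 := by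
      simp [map_pow]
    rw [habs] at h1 h2
    refine ⟨h1, h2, ?_⟩
    rwa [norm_mul, norm_inv, ← div_eq_mul_inv] at h3
  constructor
  · -- part (i)
    refine ⟨{c : ℂ | ‖c‖ ∈ Set.Icc (Real.sqrt ε) (Real.sqrt M)}, ?_, ?_, ?_⟩
    · -- compact: closed and bounded
      apply Metric.isCompact_of_isClosed_isBounded
      · exact IsClosed.preimage continuous_norm isClosed_Icc
      · apply Bornology.IsBounded.subset (Metric.isBounded_closedBall
          (x := (0 : ℂ)) (r := Real.sqrt M))
        intro c hc
        simp only [Metric.mem_closedBall, dist_zero_right]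
        exact hc.2
    · intro c hc
      simp only [Set.mem_compl_iff, Set.mem_singleton_iff]
      intro h0
      rw [h0] at hc
      have : Real.sqrt ε ≤ 0 := by simpa using hc.1
      have := Real.sqrt_pos.mpr hε
      linarith
    · intro c hc hcK a ha
      have hzero : ∀ p : ℂ × ℂ,
          f (nMat p.1 * zMat c * sMat a * w0Mat * nMat p.2) = 0 := by
        intro p
        by_contra hne
        have hmem : (nMat p.1 * zMat c * sMat a * w0Mat * nMat p.2) ∈ tsupport f :=
          subset_tsupport f hne
        obtain ⟨h1, h2, _⟩ := key a c p.1 p.2 ha hmem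
        apply hcK
        constructor
        · have h1' : Real.sqrt ε ^ 2 ≤ ‖c‖ ^ 2 := by
            rw [Real.sq_sqrt hε.le]; exact h1
          nlinarith [Real.sqrt_nonneg ε, norm_nonneg c]
        · have : ‖c‖ ^ 2 ≤ Real.sqrt M ^ 2 := by
            rw [Real.sq_sqrt hM.le]; exact h2
          nlinarith [Real.sqrt_nonneg M, norm_nonneg c]
      simp only [Jorb, hzero, integral_zero]
  · -- part (ii)
    refine ⟨Real.sqrt ε / M, div_pos (Real.sqrt_pos.mpr hε) hM, ?_⟩
    intro a ha haδ c hc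
    have hzero : ∀ p : ℂ × ℂ,
        f (nMat p.1 * zMat c * sMat a * w0Mat * nMat p.2) = 0 := by
      intro p
      by_contra hne
      have hmem : (nMat p.1 * zMat c * sMat a * w0Mat * nMat p.2) ∈ tsupport f :=
        subset_tsupport f hne
      obtain ⟨h1, _, h3⟩ := key a c p.1 p.2 ha hmem
      have hca : Real.sqrt ε ≤ ‖c‖ := by
        have : Real.sqrt ε ^ 2 ≤ ‖c‖ ^ 2 := by
          rw [Real.sq_sqrt hε.le]; exact h1
        nlinarith [Real.sqrt_nonneg ε, norm_nonneg c]
      have hapos : (0 : ℝ) < ‖a‖ := norm_pos_iff.mpr ha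
      have : ‖c‖ ≤ M * ‖a‖ := by
        rw [div_le_iff₀ hapos] at h3
        linarith
      have : Real.sqrt ε ≤ M * ‖a‖ := le_trans hca this
      have : Real.sqrt ε / M ≤ ‖a‖ := by
        rw [div_le_iff₀ hM]; linarith
      linarith
    simp only [Jorb, hzero, integral_zero]
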